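/- Let π ∈ S_n and let G_π be its permutation graph. Suppose u < v, u and v are not adjacent in G_π, and {u,v} is a dominating set of G_π. Then: (1) every private neighbor of u (a vertex whose closed neighborhood intersects {u,v} exactly in {u}) is less than v; (2) every private neighbor of v is greater than u; and (3) every shared neighbor of u and v (a vertex adjacent to both) is either less than u or greater than v. -/

import Mathlib

/-- The permutation graph of `π`: vertices `0,…,n-1` (0-indexed version of `1,…,n`),
with `i < j` adjacent iff `π⁻¹ i > π⁻¹ j`. -/
def permGraph {n : ℕ} (π : Equiv.Perm (Fin n)) : SimpleGraph (Fin n) where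
  Adj i j := (i < j ∧ π.symm j < π.symm i) ∨ (j < i ∧ π.symm i < π.symm j)
  symm := ⟨by intro i j h; tauto⟩
  loopless := ⟨by intro i h; rcases h with ⟨h, _⟩ | ⟨h, _⟩ <;> exact lt_irrefl i h⟩

/-- `D` dominates `G`: every vertex is in `D` or adjacent to an element of `D`. -/
def Dominates {V : Type*} (G : SimpleGraph V) (D : Set V) : Prop :=
  ∀ v, v ∈ D ∨ ∃ d ∈ D, G.Adj v d

/-- The domination number: minimum cardinality of a dominating set. -/
noncomputable def domNumber {V : Type*} [Fintype V] (G : SimpleGraph V) : ℕ :=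
  sInf {k | ∃ D : Finset V, D.card = k ∧ Dominates G ↑D}

/-- Closed neighborhood `N[x]`. -/
def closedNbhd {V : Type*} (G : SimpleGraph V) (x : V) : Set V :=
  {y | y = x ∨ G.Adj x y}

/-- Degree of a vertex. -/
noncomputable def deg {V : Type*} (G : SimpleGraph V) (v : V) : ℕ :=
  (G.neighborSet v).ncard

theorem dom_pair_nonadjacent_neighbors {n : ℕ} (π : Equiv.Perm (Fin n)) (u v : Fin n)
    (huv : u < v) (hadj : ¬ (permGraph π).Adj u v)
    (hdom : Dominates (permGraph π) {u, v}) :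
    (∀ x, closedNbhd (permGraph π) x ∩ {u, v} = {u} → x < v) ∧
    (∀ x, closedNbhd (permGraph π) x ∩ {u, v} = {v} → u < x) ∧
    (∀ x, (permGraph π).Adj x u → (permGraph π).Adj x v → x < u ∨ v < x) := by
  have hne : u ≠ v := ne_of_lt huv
  have h1 : π.symm u < π.symm v := by
    simp only [permGraph] at hadj
    push_neg at hadj
    have h2 := hadj.1 huv
    rcases lt_or_eq_of_le h2 with h | h
    · exact h
    · exact absurd (π.symm.injective h) hne
  refine ⟨?_, ?_, ?_⟩
  · intro x hx
    have hu : u ∈ closedNbhd (permGraph π) x := ((Set.ext_iff.mp hx u).mpr rfl).1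
    have hv : v ∉ closedNbhd (permGraph π) x := by
      intro h
      have : v ∈ ({u} : Set (Fin n)) := hx ▸ ⟨h, Or.inr rfl⟩
      exact hne.symm this
    rcases hu with h | h
    · exact h ▸ huv
    · by_contra hlt
      push_neg at hlt
      have hxv : v < x := lt_of_le_of_ne hlt (fun h' => hv (Or.inl h'))
      rcases h with ⟨h2, h3⟩ | ⟨h2, h3⟩
      · exact absurd (lt_trans hxv h2) (lt_asymm huv)
      · -- u < x, π.symm x < π.symm u
        have : (permGraph π).Adj x v := Or.inr ⟨hxv, lt_trans h3 h1⟩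
        exact hv (Or.inr this)
  · intro x hx
    have hv : v ∈ closedNbhd (permGraph π) x := ((Set.ext_iff.mp hx v).mpr rfl).1
    have hu : u ∉ closedNbhd (permGraph π) x := by
      intro h
      have : u ∈ ({v} : Set (Fin n)) := hx ▸ ⟨h, Or.inl rfl⟩
      exact hne this
    rcases hv with h | h
    · exact h ▸ huv
    · by_contra hlt
      push_neg at hlt
      have hxu : x < u := lt_of_le_of_ne hlt (fun h' => hu (Or.inl h'.symm))
      rcases h with ⟨h2, h3⟩ | ⟨h2, h3⟩
      · -- x < v, π.symm v < π.symm x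
        have : (permGraph π).Adj x u := Or.inl ⟨hxu, lt_trans h1 h3⟩
        exact hu (Or.inr this)
      · exact absurd (lt_trans huv h2) (lt_asymm hxu)
  · intro x hxu hxv
    rcases hxu with ⟨h2, h3⟩ | ⟨h2, h3⟩
    · exact Or.inl h2
    · rcases hxv with ⟨h4, h5⟩ | ⟨h4, h5⟩
      · exact absurd (lt_trans h3 h1) (lt_asymm h5)
      · exact Or.inr h4
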